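/- For every odd d > 1 and positive integer t, the graph H_t (defined below) is d-regular, connected, and has (t+1)(d+1) + 2 vertices. -/

import Mathlib

def blockSize (t d j : ℕ) : ℕ :=
  if j = 0 ∨ j = 3 * t + 2 then 2
  else if (j - 1) % 3 = 0 then d - 1 else 1

def Ht (t d : ℕ) : SimpleGraph (Σ j : Fin (3 * t + 3), Fin (blockSize t d j.val)) where
  Adj u v :=
    (u.1.val + 1 = v.1.val ∨ v.1.val + 1 = u.1.val) ∨
      (u.1 = v.1 ∧ u.2.val ≠ v.2.val ∧
        ((u.1.val = 1 ∨ u.1.val = 3 * t + 1) → u.2.val / 2 ≠ v.2.val / 2))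
  symm := by
    constructor
    rintro ⟨j, p⟩ ⟨j', q⟩ h
    rcases h with h | ⟨h1, h2, h3⟩
    · exact Or.inl h.symm
    · subst h1
      exact Or.inr ⟨rfl, h2.symm, fun hj => (h3 hj).symm⟩
  loopless := by
    constructor
    rintro ⟨j, p⟩ h
    rcases h with h | ⟨-, h2, -⟩
    · omega
    · exact h2 rfl

open Finset

private lemma blockSize_spec (t d j : ℕ) :
    (¬(j = 0 ∨ j = 3 * t + 2) ∨ blockSize t d j = 2) ∧
    ((j = 0 ∨ j = 3 * t + 2) ∨ ¬((j - 1) % 3 = 0) ∨ blockSize t d j = d - 1) ∧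
    ((j = 0 ∨ j = 3 * t + 2) ∨ (j - 1) % 3 = 0 ∨ blockSize t d j = 1) := by
  unfold blockSize
  by_cases h1 : j = 0 ∨ j = 3 * t + 2
  · rw [if_pos h1]; exact ⟨Or.inr rfl, Or.inl h1, Or.inl h1⟩
  · rw [if_neg h1]
    by_cases h2 : (j - 1) % 3 = 0
    · rw [if_pos h2]; exact ⟨Or.inl h1, Or.inr (Or.inr rfl), Or.inr (Or.inl h2)⟩
    · rw [if_neg h2]; exact ⟨Or.inl h1, Or.inr (Or.inl h2), Or.inr (Or.inr rfl)⟩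

private lemma sum_if_succ (n a X : ℕ) :
    (∑ k ∈ Finset.range n, if k + 1 = a then X else 0) = if 1 ≤ a ∧ a ≤ n then X else 0 := by
  induction n with
  | zero => rw [Finset.range_zero, Finset.sum_empty, if_neg (by omega)]
  | succ n ih => rw [Finset.sum_range_succ, ih]; split_ifs <;> omega

private lemma sum_if_eq (n a X : ℕ) :
    (∑ k ∈ Finset.range n, if k = a then X else 0) = if a < n then X else 0 := by
  induction n with
  | zero => rw [Finset.range_zero, Finset.sum_empty, if_neg (by omega)]
  | succ n ih => rw [Finset.sum_range_succ, ih]; split_ifs <;> omega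

private lemma card_filter_ne (m : ℕ) (p : Fin m) :
    (Finset.univ.filter fun q : Fin m => p.val ≠ q.val).card = m - 1 := by
  classical
  have h : (Finset.univ.filter fun q : Fin m => p.val ≠ q.val) = Finset.univ.erase p := by
    ext q
    simp only [Finset.mem_filter, Finset.mem_univ, true_and, Finset.mem_erase, and_true,
      ne_eq, Fin.ext_iff]
    omega
  rw [h, Finset.card_erase_of_mem (Finset.mem_univ _), Finset.card_univ, Fintype.card_fin]

private lemma card_filter_match (m : ℕ) (hm : m % 2 = 0) (p : Fin m) :
    (Finset.univ.filter fun q : Fin m => p.val ≠ q.val ∧ p.val / 2 ≠ q.val / 2).card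
      = m - 2 := by
  classical
  have hp := p.isLt
  have h1 : (Finset.univ.filter fun q : Fin m => p.val ≠ q.val ∧ p.val / 2 ≠ q.val / 2)
      = Finset.univ.filter fun q : Fin m => ¬ (p.val / 2 = q.val / 2) := by
    ext q
    simp only [Finset.mem_filter, Finset.mem_univ, true_and]
    omega
  have ha : 2 * (p.val / 2) < m := by omega
  have hb : 2 * (p.val / 2) + 1 < m := by omega
  have h2 : (Finset.univ.filter fun q : Fin m => p.val / 2 = q.val / 2)
      = {(⟨2 * (p.val / 2), ha⟩ : Fin m), ⟨2 * (p.val / 2) + 1, hb⟩} := by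
    ext q
    simp only [Finset.mem_filter, Finset.mem_univ, true_and, Finset.mem_insert,
      Finset.mem_singleton, Fin.ext_iff]
    omega
  have h3 := Finset.card_filter_add_card_filter_not
    (s := (Finset.univ : Finset (Fin m))) (p := fun q : Fin m => p.val / 2 = q.val / 2)
  rw [h2, Finset.card_pair (by simp [Fin.ext_iff]), Finset.card_univ, Fintype.card_fin] at h3
  rw [h1]
  omega

private lemma card_filter_sigma {n : ℕ} {f : ℕ → ℕ}
    (P : (Σ j : Fin n, Fin (f j.val)) → Prop) [DecidablePred P] :
    (Finset.univ.filter P).card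
      = ∑ j : Fin n, (Finset.univ.filter fun q : Fin (f j.val) => P ⟨j, q⟩).card := by
  classical
  have h : (Finset.univ.filter P)
      = Finset.univ.sigma fun j : Fin n => Finset.univ.filter fun q : Fin (f j.val) => P ⟨j, q⟩ := by
    ext ⟨j, q⟩
    simp [Finset.mem_sigma]
  rw [h, Finset.card_sigma]

private lemma sum_aux (e : ℕ) (t : ℕ) :
    (∑ k ∈ Finset.range (3 * t + 1), if k % 3 = 0 then e else 1) = (t + 1) * e + 2 * t := by
  induction t with
  | zero => simp
  | succ n ih =>
      have h : 3 * (n + 1) + 1 = (3 * n + 1) + 1 + 1 + 1 := by ring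
      rw [h, Finset.sum_range_succ, Finset.sum_range_succ, Finset.sum_range_succ, ih,
        if_neg (by omega), if_neg (by omega), if_pos (by omega)]
      ring

instance HtAdjDecidable (t d : ℕ) : DecidableRel (Ht t d).Adj := fun u v =>
  inferInstanceAs (Decidable ((u.1.val + 1 = v.1.val ∨ v.1.val + 1 = u.1.val) ∨
      (u.1 = v.1 ∧ u.2.val ≠ v.2.val ∧
        ((u.1.val = 1 ∨ u.1.val = 3 * t + 1) → u.2.val / 2 ≠ v.2.val / 2))))

private lemma ht_degree (d t : ℕ) (hd3 : 3 ≤ d) (hdo : d % 2 = 1) (ht : 0 < t)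
    (v : Σ j : Fin (3 * t + 3), Fin (blockSize t d j.val)) :
    (Finset.univ.filter fun w => (Ht t d).Adj v w).card = d := by
  classical
  obtain ⟨⟨j, hj⟩, p⟩ := v
  rw [card_filter_sigma]
  set W := (Finset.univ.filter fun q : Fin (blockSize t d j) =>
      p.val ≠ q.val ∧ ((j = 1 ∨ j = 3 * t + 1) → p.val / 2 ≠ q.val / 2)).card with hWdef
  have key : ∀ j' : Fin (3 * t + 3),
      (Finset.univ.filter fun q : Fin (blockSize t d j'.val) =>
          (Ht t d).Adj ⟨⟨j, hj⟩, p⟩ ⟨j', q⟩).card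
        = ((if j'.val + 1 = j then blockSize t d (j - 1) else 0)
            + (if j'.val = j + 1 then blockSize t d (j + 1) else 0))
          + (if j' = (⟨j, hj⟩ : Fin (3 * t + 3)) then W else 0) := by
    rintro ⟨j', hj'⟩
    simp only [Fin.mk_eq_mk]
    by_cases h1 : j' + 1 = j
    · rw [if_pos h1, if_neg (show ¬(j' = j + 1) by omega), if_neg (show ¬(j' = j) by omega)]
      have hfil : (Finset.univ.filter fun q : Fin (blockSize t d j') =>
          (Ht t d).Adj ⟨⟨j, hj⟩, p⟩ ⟨⟨j', hj'⟩, q⟩) = Finset.univ :=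
        Finset.filter_true_of_mem fun q _ => Or.inl (Or.inr h1)
      rw [hfil, Finset.card_univ, Fintype.card_fin]
      have hj1 : j' = j - 1 := by omega
      rw [hj1]
      omega
    · by_cases h2 : j' = j + 1
      · rw [if_neg h1, if_pos h2, if_neg (show ¬(j' = j) by omega)]
        have hfil : (Finset.univ.filter fun q : Fin (blockSize t d j') =>
            (Ht t d).Adj ⟨⟨j, hj⟩, p⟩ ⟨⟨j', hj'⟩, q⟩) = Finset.univ :=
          Finset.filter_true_of_mem fun q _ => Or.inl (Or.inl h2.symm)
        rw [hfil, Finset.card_univ, Fintype.card_fin, h2]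
        omega
      · by_cases h3 : j' = j
        · subst h3
          rw [if_neg h1, if_neg h2, if_pos rfl, hWdef]
          have hcong : ∀ q : Fin (blockSize t d j'), q ∈ Finset.univ →
              ((Ht t d).Adj ⟨⟨j', hj⟩, p⟩ ⟨⟨j', hj'⟩, q⟩ ↔
                (p.val ≠ q.val ∧ ((j' = 1 ∨ j' = 3 * t + 1) → p.val / 2 ≠ q.val / 2))) := by
            intro q _
            constructor
            · rintro ((h | h) | ⟨-, h2', h3'⟩)
              · exact absurd (show j' + 1 = j' from h) (by omega)
              · exact absurd (show j' + 1 = j' from h) (by omega)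
              · exact ⟨h2', h3'⟩
            · rintro ⟨a, b⟩
              exact Or.inr ⟨rfl, a, b⟩
          rw [Finset.filter_congr hcong]
          simp
        · rw [if_neg h1, if_neg h2, if_neg h3]
          rw [Finset.card_eq_zero, Finset.filter_eq_empty_iff]
          rintro q -
          rintro ((h | h) | ⟨hh, -, -⟩)
          · exact absurd (show j + 1 = j' from h) (by omega)
          · exact absurd (show j' + 1 = j from h) h1
          · rw [Fin.mk_eq_mk] at hh
            omega
  rw [Finset.sum_congr rfl (fun j' _ => key j'), Finset.sum_add_distrib,
    Finset.sum_add_distrib,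
    Fin.sum_univ_eq_sum_range (fun k => if k + 1 = j then blockSize t d (j - 1) else 0),
    Fin.sum_univ_eq_sum_range (fun k => if k = j + 1 then blockSize t d (j + 1) else 0),
    sum_if_succ, sum_if_eq, Finset.sum_ite_eq' Finset.univ (⟨j, hj⟩ : Fin (3 * t + 3)),
    if_pos (Finset.mem_univ _)]
  have s1 := blockSize_spec t d (j - 1)
  have s2 := blockSize_spec t d (j + 1)
  have s3 := blockSize_spec t d j
  by_cases hm : j = 1 ∨ j = 3 * t + 1
  · have hW : W = blockSize t d j - 2 := by
      rw [hWdef]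
      have heven : blockSize t d j % 2 = 0 := by omega
      have hcong : ∀ q : Fin (blockSize t d j), q ∈ Finset.univ →
          ((p.val ≠ q.val ∧ ((j = 1 ∨ j = 3 * t + 1) → p.val / 2 ≠ q.val / 2)) ↔
            (p.val ≠ q.val ∧ p.val / 2 ≠ q.val / 2)) := by
        intro q _
        constructor
        · rintro ⟨a, b⟩; exact ⟨a, b hm⟩
        · rintro ⟨a, b⟩; exact ⟨a, fun _ => b⟩
      rw [Finset.filter_congr hcong, card_filter_match _ heven]
    rw [hW]
    split_ifs <;> omega
  · have hW : W = blockSize t d j - 1 := by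
      rw [hWdef]
      have hcong : ∀ q : Fin (blockSize t d j), q ∈ Finset.univ →
          ((p.val ≠ q.val ∧ ((j = 1 ∨ j = 3 * t + 1) → p.val / 2 ≠ q.val / 2)) ↔
            (p.val ≠ q.val)) := by
        intro q _
        constructor
        · rintro ⟨a, -⟩; exact a
        · intro a; exact ⟨a, fun h => absurd h hm⟩
      rw [Finset.filter_congr hcong, card_filter_ne]
    rw [hW]
    split_ifs <;> omega

theorem Ht_regular_connected_card (d t : ℕ) (hodd : Odd d) (hd : 1 < d) (ht : 0 < t) :
    (∀ v, ((Ht t d).neighborSet v).ncard = d) ∧ (Ht t d).Connected ∧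
      Fintype.card (Σ j : Fin (3 * t + 3), Fin (blockSize t d j.val)) =
        (t + 1) * (d + 1) + 2 := by
  classical
  have hdo : d % 2 = 1 := Nat.odd_iff.mp hodd
  have hd3 : 3 ≤ d := by omega
  have hbpos : ∀ k, 0 < blockSize t d k := by
    intro k; have := blockSize_spec t d k; omega
  refine ⟨?_, ?_, ?_⟩
  · intro v
    rw [Set.ncard_eq_toFinset_card', ← SimpleGraph.neighborFinset_def,
      SimpleGraph.neighborFinset_eq_filter]
    exact ht_degree d t hd3 hdo ht v
  · have base : ∀ (k : ℕ) (hk : k < 3 * t + 3) (q : Fin (blockSize t d k)),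
        (Ht t d).Reachable ⟨⟨0, by omega⟩, ⟨0, hbpos 0⟩⟩ ⟨⟨k, hk⟩, q⟩ := by
      intro k
      induction k with
      | zero =>
          intro hk q
          by_cases hq : q.val = 0
          · have hq' : q = ⟨0, hbpos 0⟩ := Fin.ext hq
            rw [hq']
          · refine SimpleGraph.Adj.reachable (Or.inr ⟨rfl, fun h => hq h.symm, fun h => ?_⟩)
            exact absurd (show (0 : ℕ) = 1 ∨ (0 : ℕ) = 3 * t + 1 from h) (by omega)
      | succ k ih =>
          intro hk q
          have hk' : k < 3 * t + 3 := by omega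
          have step : (Ht t d).Adj ⟨⟨k, hk'⟩, ⟨0, hbpos k⟩⟩ ⟨⟨k + 1, hk⟩, q⟩ :=
            Or.inl (Or.inl rfl)
          exact (ih hk' _).trans step.reachable
    rw [SimpleGraph.connected_iff]
    refine ⟨fun u v => ?_, ⟨⟨⟨0, by omega⟩, ⟨0, hbpos 0⟩⟩⟩⟩
    obtain ⟨⟨ku, hku⟩, qu⟩ := u
    obtain ⟨⟨kv, hkv⟩, qv⟩ := v
    exact (base ku hku qu).symm.trans (base kv hkv qv)
  · obtain ⟨e, rfl⟩ : ∃ e, d = e + 1 := ⟨d - 1, by omega⟩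
    rw [Fintype.card_sigma]
    simp only [Fintype.card_fin]
    rw [Fin.sum_univ_eq_sum_range (fun k => blockSize t (e + 1) k)]
    have h1 : (3 : ℕ) * t + 3 = (3 * t + 1) + 1 + 1 := by ring
    rw [h1, Finset.sum_range_succ, Finset.sum_range_succ' (fun k => blockSize t (e + 1) k)]
    have hlast : blockSize t (e + 1) (3 * t + 1 + 1) = 2 := by
      have := blockSize_spec t (e + 1) (3 * t + 1 + 1); omega
    have hfirst : blockSize t (e + 1) 0 = 2 := by
      have := blockSize_spec t (e + 1) 0; omega
    have hmid : ∀ k ∈ Finset.range (3 * t + 1),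
        blockSize t (e + 1) (k + 1) = if k % 3 = 0 then e else 1 := by
      intro k hk
      have hk' := Finset.mem_range.mp hk
      have := blockSize_spec t (e + 1) (k + 1)
      split_ifs <;> omega
    rw [Finset.sum_congr rfl hmid, sum_aux, hlast, hfirst]
    ring
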